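/- For every integer t ≥ 1 there exists a binary LCD [31t+26, 5, 16t+12] code, i.e., a 5-dimensional linear complementary dual subspace of F_2^(31t+26) with minimum weight 16t+12. -/

import Mathlib

/-- The (Hamming) weight of a vector over `F_2`. -/
def wt {n : ℕ} (x : Fin n → ZMod 2) : ℕ :=
  Finset.card (Finset.univ.filter fun i => x i ≠ 0)

/-- The dual code of a binary code `C`, with respect to the standard inner product. -/
def dualCode {n : ℕ} (C : Submodule (ZMod 2) (Fin n → ZMod 2)) :
    Submodule (ZMod 2) (Fin n → ZMod 2) where
  carrier := {x | ∀ y ∈ C, ∑ i, x i * y i = 0}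
  add_mem' := by
    intro a b ha hb y hy
    simp [Pi.add_apply, add_mul, Finset.sum_add_distrib, ha y hy, hb y hy]
  zero_mem' := by
    intro y hy
    simp
  smul_mem' := by
    intro c a ha y hy
    simp only [Pi.smul_apply, smul_eq_mul, mul_assoc, ← Finset.mul_sum, ha y hy, mul_zero]

/-- A binary code is linear complementary dual (LCD) if it meets its dual trivially. -/
def IsLCD {n : ℕ} (C : Submodule (ZMod 2) (Fin n → ZMod 2)) : Prop :=
  C ⊓ dualCode C = ⊥

/-- The minimum weight of a binary code: the smallest weight of a nonzero codeword. -/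
noncomputable def minWt {n : ℕ} (C : Submodule (ZMod 2) (Fin n → ZMod 2)) : ℕ :=
  sInf {w | ∃ x ∈ C, x ≠ 0 ∧ wt x = w}

/-- `dLCD n k` is the largest minimum weight among all binary LCD `[n,k]` codes. -/
noncomputable def dLCD (n k : ℕ) : ℕ :=
  sSup {d | ∃ C : Submodule (ZMod 2) (Fin n → ZMod 2),
    Module.finrank (ZMod 2) C = k ∧ IsLCD C ∧ minWt C = d}

/-! ### Auxiliary construction -/

/-- Simplex code generator: columns are all nonzero vectors of `F_2^5`. -/
def Scol : Fin 5 → Fin 31 → ZMod 2 := fun i j => if Nat.testBit ((j : ℕ) + 1) i then 1 else 0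

def bcols : Fin 26 → ℕ := ![15,26,27,8,18,24,7,11,22,17,20,3,13,5,9,1,23,30,16,4,10,2,26,6,28,31]

/-- Generator of an LCD `[26,5,12]` code. -/
def Bcol : Fin 5 → Fin 26 → ZMod 2 := fun i j => if Nat.testBit (bcols j) i then 1 else 0

lemma S_wt : ∀ m : Fin 5 → ZMod 2, m ≠ 0 → wt (fun r => ∑ i, m i * Scol i r) = 16 := by decide
lemma B_wt : ∀ m : Fin 5 → ZMod 2, m ≠ 0 → 12 ≤ wt (fun c => ∑ i, m i * Bcol i c) := by decide
lemma B_wt_ex : ∃ m : Fin 5 → ZMod 2, m ≠ 0 ∧ wt (fun c => ∑ i, m i * Bcol i c) = 12 := by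
  decide
lemma S_orth : ∀ k : Fin 5, ∀ m : Fin 5 → ZMod 2,
    ∑ r, (∑ i, m i * Scol i r) * Scol k r = 0 := by decide
lemma B_gram : ∀ m : Fin 5 → ZMod 2,
    (∀ k, ∑ c, (∑ i, m i * Bcol i c) * Bcol k c = 0) → m = 0 := by decide

/-- Coordinates of the long code: `t` blocks of length 31, then one block of length 26. -/
def blkE (t : ℕ) : (Fin t × Fin 31) ⊕ Fin 26 ≃ Fin (31 * t + 26) :=
  (Equiv.sumCongr (finProdFinEquiv.trans (finCongr (mul_comm t 31))) (Equiv.refl _)).trans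
    finSumFinEquiv

/-- Generator matrix `[S | S | ... | S | B]`. -/
def Gmat (t : ℕ) : Fin 5 → Fin (31 * t + 26) → ZMod 2 :=
  fun i j => Sum.elim (fun p : Fin t × Fin 31 => Scol i p.2) (fun c => Bcol i c)
    ((blkE t).symm j)

/-- Encoding map. -/
def cw (t : ℕ) : (Fin 5 → ZMod 2) →ₗ[ZMod 2] (Fin (31 * t + 26) → ZMod 2) :=
  Matrix.vecMulLinear (Matrix.of (Gmat t))

lemma cw_apply (t : ℕ) (m : Fin 5 → ZMod 2) (j : Fin (31 * t + 26)) :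
    cw t m j = ∑ i, m i * Gmat t i j := by
  simp [cw, Matrix.vecMulLinear_apply, Matrix.vecMul, dotProduct]

lemma cw_apply' (t : ℕ) (m : Fin 5 → ZMod 2) (j : Fin (31 * t + 26)) :
    cw t m j = Sum.elim (fun p : Fin t × Fin 31 => ∑ i, m i * Scol i p.2)
      (fun c => ∑ i, m i * Bcol i c) ((blkE t).symm j) := by
  rw [cw_apply]
  cases h : (blkE t).symm j <;> simp [Gmat, h]

lemma sum_blk {M : Type*} [AddCommMonoid M] (t : ℕ) (f1 : Fin 31 → M) (f2 : Fin 26 → M) :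
    (∑ j : Fin (31 * t + 26),
        Sum.elim (fun p : Fin t × Fin 31 => f1 p.2) f2 ((blkE t).symm j))
      = t • (∑ r, f1 r) + ∑ c, f2 c := by
  rw [Equiv.sum_comp (blkE t).symm
    (Sum.elim (fun p : Fin t × Fin 31 => f1 p.2) f2)]
  rw [Fintype.sum_sum_type]
  simp [Fintype.sum_prod_type]

lemma wt_eq_sum {n : ℕ} (x : Fin n → ZMod 2) :
    wt x = ∑ j, if x j ≠ 0 then 1 else 0 := by
  rw [wt, Finset.card_filter]

lemma wt_cw (t : ℕ) (m : Fin 5 → ZMod 2) :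
    wt (cw t m) = t * wt (fun r => ∑ i, m i * Scol i r)
      + wt (fun c => ∑ i, m i * Bcol i c) := by
  rw [wt_eq_sum]
  have h : ∀ j, (if cw t m j ≠ 0 then 1 else 0)
      = Sum.elim (fun p : Fin t × Fin 31 => if (∑ i, m i * Scol i p.2) ≠ 0 then 1 else 0)
        (fun c => if (∑ i, m i * Bcol i c) ≠ 0 then 1 else 0) ((blkE t).symm j) := by
    intro j
    rw [cw_apply']
    cases h : (blkE t).symm j <;> simp <;> split_ifs <;> simp [*]
  rw [Finset.sum_congr rfl (fun j _ => h j),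
    sum_blk t (fun r => if (∑ i, m i * Scol i r) ≠ 0 then 1 else 0)
      (fun c => if (∑ i, m i * Bcol i c) ≠ 0 then 1 else 0), smul_eq_mul,
    wt_eq_sum (fun r => ∑ i, m i * Scol i r), wt_eq_sum (fun c => ∑ i, m i * Bcol i c)]

lemma wt_zero {n : ℕ} : wt (0 : Fin n → ZMod 2) = 0 := by
  simp [wt]

lemma wt_cw_ne (t : ℕ) {m : Fin 5 → ZMod 2} (hm : m ≠ 0) :
    wt (cw t m) = 16 * t + wt (fun c => ∑ i, m i * Bcol i c) := by
  rw [wt_cw, S_wt m hm, Nat.mul_comm]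

lemma cw_ne_zero (t : ℕ) {m : Fin 5 → ZMod 2} (hm : m ≠ 0) : cw t m ≠ 0 := by
  intro h
  have h12 := B_wt m hm
  have := wt_cw_ne t hm
  rw [h, wt_zero] at this
  omega

lemma cw_single (t : ℕ) (k : Fin 5) (j : Fin (31 * t + 26)) :
    cw t (Pi.single k 1) j = Gmat t k j := by
  rw [cw_apply]
  rw [Finset.sum_eq_single k]
  · simp
  · intro b _ hb; simp [Pi.single_apply, hb]
  · simp

theorem exists_lcd_31t26 (t : ℕ) (ht : 1 ≤ t) :
    ∃ C : Submodule (ZMod 2) (Fin (31 * t + 26) → ZMod 2),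
      Module.finrank (ZMod 2) C = 5 ∧ IsLCD C ∧ minWt C = 16 * t + 12 := by
  refine ⟨LinearMap.range (cw t), ?_, ?_, ?_⟩
  · -- finrank
    have hinj : Function.Injective (cw t) := by
      rw [← LinearMap.ker_eq_bot, eq_bot_iff]
      intro m hm
      rw [LinearMap.mem_ker] at hm
      by_contra hm0
      exact cw_ne_zero t (by simpa using hm0) hm
    rw [LinearMap.finrank_range_of_inj hinj]
    simp
  · -- LCD
    rw [IsLCD, eq_bot_iff]
    intro x hx
    rw [Submodule.mem_inf] at hx
    obtain ⟨⟨m, rfl⟩, hd⟩ := hx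
    have hk : ∀ k : Fin 5, ∑ c, (∑ i, m i * Bcol i c) * Bcol k c = 0 := by
      intro k
      have h0 := hd (cw t (Pi.single k 1)) ⟨Pi.single k 1, rfl⟩
      have hsum : ∀ j, cw t m j * cw t (Pi.single k 1) j
          = Sum.elim
              (fun p : Fin t × Fin 31 => (∑ i, m i * Scol i p.2) * Scol k p.2)
              (fun c => (∑ i, m i * Bcol i c) * Bcol k c) ((blkE t).symm j) := by
        intro j
        rw [cw_single, cw_apply']
        cases h : (blkE t).symm j <;> simp [Gmat, h]
      rw [Finset.sum_congr rfl (fun j _ => hsum j),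
        sum_blk t (fun r => (∑ i, m i * Scol i r) * Scol k r)
          (fun c => (∑ i, m i * Bcol i c) * Bcol k c), S_orth k m] at h0
      simpa using h0
    have : m = 0 := B_gram m hk
    simp [this]
  · -- minimum weight
    obtain ⟨m0, hm0, hw0⟩ := B_wt_ex
    have hmem : (16 * t + 12) ∈ {w | ∃ x ∈ LinearMap.range (cw t), x ≠ 0 ∧ wt x = w} := by
      exact ⟨cw t m0, ⟨m0, rfl⟩, cw_ne_zero t hm0, by rw [wt_cw_ne t hm0, hw0]⟩
    have hlb : ∀ w ∈ {w | ∃ x ∈ LinearMap.range (cw t), x ≠ 0 ∧ wt x = w},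
        16 * t + 12 ≤ w := by
      rintro w ⟨x, ⟨m, rfl⟩, hx0, rfl⟩
      have hm : m ≠ 0 := by rintro rfl; simp at hx0
      have := B_wt m hm
      rw [wt_cw_ne t hm]
      omega
    exact le_antisymm (Nat.sInf_le hmem) (le_csInf ⟨_, hmem⟩ hlb)
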